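/- For every integer k ≥ 2 there exists a positive constant α_k, depending only on k, such that for all sufficiently large n, c_k(n)/n^k > 2^{−α_k·(log n)^{β_k}}, where β_k = 1/⌈log₂ k⌉. -/

import Mathlib

/-- The grid `{1,…,n}^k` as a finset of functions `Fin k → ℕ`. -/
def gridNk (k n : ℕ) : Finset (Fin k → ℕ) :=
  Fintype.piFinset fun _ => Finset.Icc 1 n

/-- `C` is a `k`-dimensional corner in `[n]^k`: a set of points
`{a} ∪ {a + d·eᵢ : 1 ≤ i ≤ k}` for some `a` and integer `d > 0`, all lying in the grid. -/
def IsGridCorner (k n : ℕ) (C : Finset (Fin k → ℕ)) : Prop :=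
  ∃ a : Fin k → ℕ, ∃ d : ℕ, 0 < d ∧
    C = insert a (Finset.image (fun i => Function.update a i (a i + d)) Finset.univ) ∧
    C ⊆ gridNk k n

/-- `A` is `k`-dimensional corner-free: it contains no `k`-dimensional corner. -/
def GridCornerFree (k n : ℕ) (A : Finset (Fin k → ℕ)) : Prop :=
  ∀ C : Finset (Fin k → ℕ), IsGridCorner k n C → ¬ C ⊆ A

/-- `c_k(n)`: the maximum size of a `k`-dimensional corner-free subset of `[n]^k`. -/
noncomputable def cornerFreeNumber (k n : ℕ) : ℕ :=
  sSup {m : ℕ | ∃ A : Finset (Fin k → ℕ), A ⊆ gridNk k n ∧ GridCornerFree k n A ∧ A.card = m}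

/-- `Γ_k(A)`: the number of `k`-dimensional corners contained in `A`. -/
noncomputable def cornerCount (k n : ℕ) (A : Finset (Fin k → ℕ)) : ℕ :=
  Set.ncard {C : Finset (Fin k → ℕ) | IsGridCorner k n C ∧ C ⊆ A}

namespace Rankin

/-- forward difference operator -/
def dder (f : ℕ → ℤ) : ℕ → ℤ := fun i => f (i+1) - f i

lemma dder_iter_succ' (f : ℕ → ℤ) (n i : ℕ) :
    dder^[n+1] f i = dder^[n] f (i+1) - dder^[n] f i := by
  rw [Function.iterate_succ_apply']; rfl

lemma dder_iter_congr {f g : ℕ → ℤ} {n i : ℕ}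
    (h : ∀ j, i ≤ j → j ≤ i + n → f j = g j) :
    dder^[n] f i = dder^[n] g i := by
  induction n generalizing i with
  | zero => simpa using h i le_rfl (by omega)
  | succ n ih =>
    rw [dder_iter_succ', dder_iter_succ']
    rw [ih (fun j h1 h2 => h j (by omega) (by omega)),
        ih (fun j h1 h2 => h j (by omega) (by omega))]

lemma dder_iter_add (f g : ℕ → ℤ) (n i : ℕ) :
    dder^[n] (fun x => f x + g x) i = dder^[n] f i + dder^[n] g i := by
  induction n generalizing i with
  | zero => rfl
  | succ n ih => rw [dder_iter_succ', dder_iter_succ', dder_iter_succ', ih, ih]; ring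

lemma dder_iter_const_mul (c : ℤ) (f : ℕ → ℤ) (n i : ℕ) :
    dder^[n] (fun x => c * f x) i = c * dder^[n] f i := by
  induction n generalizing i with
  | zero => rfl
  | succ n ih => rw [dder_iter_succ', dder_iter_succ', ih, ih]; ring

lemma dder_iter_zero_fn (n i : ℕ) : dder^[n] (fun _ => (0:ℤ)) i = 0 := by
  induction n generalizing i with
  | zero => rfl
  | succ n ih => rw [dder_iter_succ', ih, ih]; ring

lemma dder_iter_sum {γ : Type*} (s : Finset γ) (F : γ → ℕ → ℤ) (n i : ℕ) :
    dder^[n] (fun x => ∑ d ∈ s, F d x) i = ∑ d ∈ s, dder^[n] (F d) i := by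
  classical
  induction s using Finset.induction with
  | empty => simpa using dder_iter_zero_fn n i
  | @insert a s hx ih =>
    have : (fun x => ∑ d ∈ insert a s, F d x) = fun x => F a x + ∑ d ∈ s, F d x :=
      funext fun x => Finset.sum_insert hx
    rw [Finset.sum_insert hx, this, dder_iter_add, ih]

lemma dder_iter_shift (f : ℕ → ℤ) (n i : ℕ) :
    dder^[n] (fun x => f (x+1)) i = dder^[n] f (i+1) := by
  induction n generalizing f i with
  | zero => rfl
  | succ n ih =>
    rw [Function.iterate_succ_apply, Function.iterate_succ_apply]
    rw [show dder (fun x => f (x+1)) = fun x => dder f (x+1) from rfl]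
    exact ih (dder f) i

lemma abs_dder_iter_le {f : ℕ → ℤ} {K : ℤ} {n i : ℕ}
    (h : ∀ j, i ≤ j → j ≤ i + n → |f j| ≤ K) :
    |dder^[n] f i| ≤ 2^n * K := by
  induction n generalizing i with
  | zero => simpa using h i le_rfl (by omega)
  | succ n ih =>
    rw [dder_iter_succ']
    calc |dder^[n] f (i+1) - dder^[n] f i| ≤ |dder^[n] f (i+1)| + |dder^[n] f i| :=
          abs_sub _ _
    _ ≤ 2^n * K + 2^n * K := by
        gcongr <;> [exact ih (fun j h1 h2 => h j (by omega) (by omega));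
          exact ih (fun j h1 h2 => h j (by omega) (by omega))]
    _ = 2^(n+1) * K := by ring

lemma dder_iter_eq_zero {f : ℕ → ℤ} {a n i : ℕ} (hn : a ≤ n)
    (h : ∀ x, i ≤ x → x + a ≤ i + n → dder^[a] f x = 0) :
    dder^[n] f i = 0 := by
  have : n = (n - a) + a := by omega
  rw [this, Function.iterate_add_apply]
  rw [dder_iter_congr (g := fun _ => (0:ℤ)) (fun j h1 h2 => h j h1 (by omega))]
  exact dder_iter_zero_fn _ _

lemma dder_iter_sub_const (f : ℕ → ℤ) (t : ℤ) (n i : ℕ) (hn : 1 ≤ n) :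
    dder^[n] (fun x => f x - t) i = dder^[n] f i := by
  obtain ⟨n, rfl⟩ : ∃ m, n = m + 1 := ⟨n - 1, by omega⟩
  rw [Function.iterate_succ_apply, Function.iterate_succ_apply]
  have : (dder fun x => f x - t) = dder f := by funext x; simp [dder]
  rw [this]


lemma dder_leibniz (n : ℕ) (f g : ℕ → ℤ) (i : ℕ) :
    dder^[n] (fun x => f x * g x) i
      = ∑ j ∈ Finset.range (n+1),
          (n.choose j : ℤ) * (dder^[j] f (i + (n - j)) * dder^[n-j] g i) := by
  induction n generalizing f g i with
  | zero => simp
  | succ n ih =>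
    rw [Function.iterate_succ_apply]
    have hstep : dder (fun x => f x * g x) = fun x => f (x+1) * dder g x + dder f x * g x := by
      funext x; simp [dder]; ring
    rw [hstep, dder_iter_add]
    have h1 : dder^[n] (fun x => f (x+1) * dder g x) i
        = ∑ j ∈ Finset.range (n+1),
            (n.choose j : ℤ) * (dder^[j] f (i + (n - j) + 1) * dder^[n-j+1] g i) := by
      rw [ih (fun x => f (x+1)) (dder g) i]
      refine Finset.sum_congr rfl fun j hj => ?_
      rw [dder_iter_shift, Function.iterate_succ_apply]
    have h2 : dder^[n] (fun x => dder f x * g x) i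
        = ∑ j ∈ Finset.range (n+1),
            (n.choose j : ℤ) * (dder^[j+1] f (i + (n - j)) * dder^[n-j] g i) := by
      rw [ih (dder f) g i]
      refine Finset.sum_congr rfl fun j hj => ?_
      rw [Function.iterate_succ_apply]
    rw [h1, h2]
    have hT : ∑ j ∈ Finset.range (n+1+1),
          ((n+1).choose j : ℤ) * (dder^[j] f (i + (n+1 - j)) * dder^[n+1-j] g i)
        = (∑ j ∈ Finset.range (n+2),
            (n.choose j : ℤ) * (dder^[j] f (i + (n+1 - j)) * dder^[n+1-j] g i))
          + (∑ j ∈ Finset.range (n+2),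
            (if j = 0 then 0 else
              (n.choose (j-1) : ℤ) * (dder^[j] f (i + (n+1 - j)) * dder^[n+1-j] g i))) := by
      rw [← Finset.sum_add_distrib]
      refine Finset.sum_congr rfl fun j hj => ?_
      rcases Nat.eq_zero_or_pos j with rfl | hjpos
      · simp
      · obtain ⟨j', rfl⟩ : ∃ m, j = m + 1 := ⟨j - 1, by omega⟩
        rw [if_neg (by omega), Nat.choose_succ_succ (n := n) (k := j')]
        push_cast
        simp only [Nat.succ_eq_add_one]
        ring
    have hTA : ∑ j ∈ Finset.range (n+2),
          (n.choose j : ℤ) * (dder^[j] f (i + (n+1 - j)) * dder^[n+1-j] g i)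
        = ∑ j ∈ Finset.range (n+1),
            (n.choose j : ℤ) * (dder^[j] f (i + (n - j) + 1) * dder^[n-j+1] g i) := by
      rw [Finset.sum_range_succ, Nat.choose_succ_self]
      simp only [Nat.cast_zero, zero_mul, add_zero]
      refine Finset.sum_congr rfl fun j hj => ?_
      have hjn : j ≤ n := by simpa [Nat.lt_succ_iff] using hj
      have e1 : n + 1 - j = (n - j) + 1 := by omega
      have e2 : i + ((n-j)+1) = i + (n - j) + 1 := by omega
      rw [e1, e2]
    have hTB : ∑ j ∈ Finset.range (n+2),
          (if j = 0 then 0 else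
            (n.choose (j-1) : ℤ) * (dder^[j] f (i + (n+1 - j)) * dder^[n+1-j] g i))
        = ∑ j ∈ Finset.range (n+1),
            (n.choose j : ℤ) * (dder^[j+1] f (i + (n - j)) * dder^[n-j] g i) := by
      rw [Finset.sum_range_succ']
      simp only [if_true, Nat.zero_eq, add_zero, if_pos trivial]
      refine Finset.sum_congr rfl fun j hj => ?_
      have e1 : n + 1 - (j+1) = n - j := by omega
      have e2 : j + 1 - 1 = j := by omega
      simp only [if_neg (Nat.succ_ne_zero j), e1, e2]
    rw [hT, hTA, hTB]

/-- `S` contains no polynomial progression pattern of degree `e ∈ [1, E]`,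
positive leading difference, of length `L`. -/
def Free (S : Finset ℤ) (L E : ℕ) : Prop :=
  ∀ e : ℕ, ∀ v : ℕ → ℤ, 1 ≤ e → e ≤ E → e + 1 ≤ L →
    (∀ i, i + e + 2 ≤ L → dder^[e+1] v i = 0) →
    0 < dder^[e] v 0 →
    (∀ i, i < L → v i ∈ S) → False

lemma dder_iter_const (c : ℤ) {e : ℕ} (i : ℕ) (he : 1 ≤ e) :
    dder^[e] (fun _ => c) i = 0 := by
  obtain ⟨m, rfl⟩ : ∃ m, e = m + 1 := ⟨e - 1, by omega⟩
  rw [Function.iterate_succ_apply]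
  rw [show dder (fun _ => c) = fun _ => (0:ℤ) from funext fun x => by simp [dder]]
  exact dder_iter_zero_fn _ _

lemma singleton_free (x : ℤ) (L E : ℕ) : Free {x} L E := by
  intro e v he1 _ heL hv0 hvpos hvS
  have : dder^[e] v 0 = dder^[e] (fun _ => x) 0 :=
    dder_iter_congr fun j h1 h2 => by
      simpa using hvS j (by omega)
  rw [this, dder_iter_const x 0 he1] at hvpos
  exact lt_irrefl 0 hvpos

section Digits

variable {D : ℕ}

def phi (B : ℤ) (z : Fin D → ℤ) : ℤ := ∑ d, z d * B ^ (d : ℕ)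
def psi (z : Fin D → ℤ) : ℤ := ∑ d, z d * z d

lemma phi_eq_zero {B : ℤ} (hB : 0 < B) :
    ∀ {D : ℕ} (w : Fin D → ℤ), (∀ d, 2 * |w d| < B) → phi B w = 0 → ∀ d, w d = 0 := by
  intro D
  induction D with
  | zero => intro w _ _ d; exact absurd d.2 (by omega)
  | succ D ih =>
    intro w hw hphi d
    have hsplit : phi B w = w 0 + B * phi B (fun d : Fin D => w d.succ) := by
      rw [phi, Fin.sum_univ_succ]
      simp only [Fin.val_zero, pow_zero, mul_one]
      congr 1
      rw [phi, Finset.mul_sum]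
      refine Finset.sum_congr rfl fun j _ => ?_
      rw [Fin.val_succ, pow_succ]
      ring
    have htail : phi B (fun d : Fin D => w d.succ) = 0 := by
      by_contra h
      have h1 : 1 ≤ |phi B (fun d : Fin D => w d.succ)| := Int.one_le_abs (by simpa using h)
      have : |w 0| = |B * phi B (fun d : Fin D => w d.succ)| := by
        have : w 0 = -(B * phi B (fun d : Fin D => w d.succ)) := by
          rw [hsplit] at hphi; linarith
        rw [this, abs_neg]
      rw [abs_mul, abs_of_pos hB] at this
      have : B ≤ |w 0| := by nlinarith [abs_nonneg (w 0)]
      have := hw 0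
      nlinarith [abs_nonneg (w 0)]
    have hw0 : w 0 = 0 := by rw [hsplit, htail] at hphi; linarith
    rcases Fin.eq_zero_or_eq_succ d with rfl | ⟨j, rfl⟩
    · exact hw0
    · exact ih (fun d => w d.succ) (fun d => hw d.succ) htail j

lemma phi_nonneg {B : ℤ} (z : Fin D → ℤ) (hz : ∀ d, 0 ≤ z d) (hB : 0 ≤ B) :
    0 ≤ phi B z :=
  Finset.sum_nonneg fun d _ => mul_nonneg (hz d) (pow_nonneg hB _)

lemma phi_lt {B M : ℤ} (z : Fin D → ℤ) (hz : ∀ d, z d < M) (hz0 : ∀ d, 0 ≤ z d)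
    (hMB : M ≤ B) (hM : 0 < M) : phi B z < B ^ D := by
  have hB : 0 < B := lt_of_lt_of_le hM hMB
  have h1 : phi B z ≤ ∑ d : Fin D, (B - 1) * B ^ (d:ℕ) := by
    refine Finset.sum_le_sum fun d _ => ?_
    exact mul_le_mul_of_nonneg_right (by have := hz d; omega) (pow_nonneg hB.le _)
  have h2 : ∑ d : Fin D, (B - 1) * B ^ (d:ℕ) = B ^ D - 1 := by
    rw [← Finset.mul_sum, Fin.sum_univ_eq_sum_range (fun j => B ^ j), mul_comm]
    exact geom_sum_mul B D
  omega

lemma psi_mem {M : ℤ} (z : Fin D → ℤ) (hz : ∀ d, z d < M) (hz0 : ∀ d, 0 ≤ z d)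
    (hM : 0 < M) : 0 ≤ psi z ∧ psi z ≤ D * M^2 := by
  constructor
  · exact Finset.sum_nonneg fun d _ => mul_self_nonneg _
  · have h1 : psi z ≤ ∑ _d : Fin D, M^2 := by
      refine Finset.sum_le_sum fun d _ => ?_
      have h2 := hz d; have h3 := hz0 d
      nlinarith
    have h2 : ∑ _d : Fin D, M^2 = (D : ℤ) * M^2 := by
      rw [Finset.sum_const, Finset.card_univ, Fintype.card_fin]; simp
    omega
end Digits

lemma shift_pigeon {γ : Type*} [DecidableEq γ] (grid : Finset γ) (S' T : Finset ℤ)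
    (ψ : γ → ℤ) (h : ∀ g ∈ grid, ∀ y ∈ S', ψ g - y ∈ T) (hT : T.Nonempty) :
    ∃ t ∈ T, grid.card * S'.card ≤ T.card * (grid.filter fun g => ψ g - t ∈ S').card := by
  classical
  have hdouble : ∑ t ∈ T, (grid.filter fun g => ψ g - t ∈ S').card
      = grid.card * S'.card := by
    have h1 : ∀ t, (grid.filter fun g => ψ g - t ∈ S').card
        = ∑ g ∈ grid, if ψ g - t ∈ S' then 1 else 0 := fun t => Finset.card_filter _ _
    simp only [h1]
    rw [Finset.sum_comm]
    have h2 : ∀ g ∈ grid, (∑ t ∈ T, if ψ g - t ∈ S' then 1 else 0) = S'.card := by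
      intro g hg
      rw [← Finset.card_filter]
      refine Finset.card_bij' (fun t _ => ψ g - t) (fun y _ => ψ g - y) ?_ ?_ ?_ ?_
      · intro t ht
        simp only [Finset.mem_filter] at ht
        exact ht.2
      · intro y hy
        simp only [Finset.mem_filter]
        exact ⟨h g hg y hy, by simpa using hy⟩
      · intro t ht; ring
      · intro y hy; ring
    rw [Finset.sum_congr rfl h2, Finset.sum_const, smul_eq_mul]
  obtain ⟨t, ht, hmax⟩ := T.exists_max_image
    (fun t => (grid.filter fun g => ψ g - t ∈ S').card) hT
  refine ⟨t, ht, ?_⟩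
  calc grid.card * S'.card = ∑ t ∈ T, (grid.filter fun g => ψ g - t ∈ S').card := hdouble.symm
  _ ≤ ∑ _t ∈ T, (grid.filter fun g => ψ g - t ∈ S').card :=
      Finset.sum_le_sum fun x hx => hmax x hx
  _ = T.card * (grid.filter fun g => ψ g - t ∈ S').card := by
      rw [Finset.sum_const, smul_eq_mul]


/-- One level of the Rankin construction. -/
lemma transfer (L E D M : ℕ) (S' : Finset ℤ)
    (hE : 1 ≤ E) (h2E : 2*E + 1 ≤ L) (hD : 1 ≤ D) (hM : 1 ≤ M)
    (hS'sub : S' ⊆ Finset.Ico 0 ((D * M^2 + 1 : ℕ) : ℤ))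
    (hfree : Free S' L (2*E)) :
    ∃ S : Finset ℤ, S ⊆ Finset.Ico 0 (((2^(L+2) * M : ℕ) ^ D : ℕ) : ℤ) ∧ Free S L E ∧
      M ^ D * S'.card ≤ (2*(D*M^2)+1) * S.card := by
  classical
  set B : ℤ := ((2^(L+2) * M : ℕ) : ℤ) with hBdef
  have hMpos : (0:ℤ) < (M:ℤ) := by exact_mod_cast hM
  have hMB : (M:ℤ) ≤ B := by
    rw [hBdef]; push_cast
    nlinarith [pow_pos (by norm_num : (0:ℤ) < 2) (L+2)]
  have hBpos : 0 < B := lt_of_lt_of_le hMpos hMB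
  set box : Finset (Fin D → ℤ) := Fintype.piFinset fun _ => Finset.Ico (0:ℤ) (M:ℤ) with hbox
  have hboxcard : box.card = M ^ D := by
    rw [hbox, Fintype.card_piFinset]
    simp [Int.toNat_natCast]
  have hmembox : ∀ z ∈ box, ∀ d, 0 ≤ z d ∧ z d < (M:ℤ) := by
    intro z hz d
    rw [hbox, Fintype.mem_piFinset] at hz
    simpa [Finset.mem_Ico] using hz d
  -- pigeonhole to choose the shift t
  set T : Finset ℤ := Finset.Icc (-(D*M^2 : ℕ) : ℤ) ((D*M^2 : ℕ) : ℤ) with hT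
  have hTmem : ∀ z ∈ box, ∀ y ∈ S', psi z - y ∈ T := by
    intro z hz y hy
    have h1 := psi_mem z (fun d => (hmembox z hz d).2) (fun d => (hmembox z hz d).1) hMpos
    have h2 := hS'sub hy
    simp only [Finset.mem_Ico] at h2
    simp only [hT, Finset.mem_Icc]
    have hDM : (0:ℤ) ≤ (D:ℤ) * (M:ℤ)^2 := by positivity
    push_cast
    push_cast at h1 h2
    omega
  have hTcard : T.card = 2*(D*M^2)+1 := by
    rw [hT, Int.card_Icc]
    have h1 : ((D*M^2 : ℕ) : ℤ) + 1 - (-(D*M^2 : ℕ) : ℤ) = ((2*(D*M^2)+1 : ℕ) : ℤ) := by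
      push_cast; ring
    rw [h1, Int.toNat_natCast]
  have hTne : T.Nonempty := ⟨0, by
    simp only [hT, Finset.mem_Icc]
    exact ⟨neg_nonpos_of_nonneg (Int.natCast_nonneg _), Int.natCast_nonneg _⟩⟩
  obtain ⟨t, _, hcard⟩ := shift_pigeon box S' T psi hTmem hTne
  set good : Finset (Fin D → ℤ) := box.filter (fun z => psi z - t ∈ S') with hgood
  refine ⟨good.image (phi B), ?_, ?_, ?_⟩
  · -- subset of [0, B^D)
    intro x hx
    obtain ⟨z, hz, rfl⟩ := Finset.mem_image.mp hx
    have hzbox := Finset.mem_filter.mp hz |>.1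
    rw [Finset.mem_Ico]
    constructor
    · exact phi_nonneg _ (fun d => (hmembox z hzbox d).1) hBpos.le
    · have h1 := phi_lt z (fun d => (hmembox z hzbox d).2) (fun d => (hmembox z hzbox d).1) hMB hMpos
      have h2 : (B:ℤ)^D = (((2^(L+2) * M : ℕ) ^ D : ℕ) : ℤ) := by
        rw [hBdef]; push_cast; ring
      rw [h2] at h1
      exact h1
  · -- freeness
    intro e v he1 heE heL hv0 hvpos hvS
    have hZex : ∀ i, i < L → ∃ z, (z ∈ box ∧ psi z - t ∈ S') ∧ phi B z = v i := by
      intro i hi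
      obtain ⟨z, hz, hphi⟩ := Finset.mem_image.mp (hvS i hi)
      obtain ⟨h1, h2⟩ := Finset.mem_filter.mp hz
      exact ⟨z, ⟨h1, h2⟩, hphi⟩
    set Z : ℕ → (Fin D → ℤ) := fun i =>
      if h : i < L then (hZex i h).choose else fun _ => 0 with hZ
    have hZspec : ∀ i (h : i < L), (Z i ∈ box ∧ psi (Z i) - t ∈ S') ∧ phi B (Z i) = v i := by
      intro i h
      rw [hZ]; simp only [dif_pos h]
      exact (hZex i h).choose_spec
    set F : Fin D → ℕ → ℤ := fun d i => Z i d with hF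
    have hFbound : ∀ i, i < L → ∀ d, 0 ≤ F d i ∧ F d i < (M:ℤ) := by
      intro i hi d
      exact hmembox _ ((hZspec i hi).1.1) d
    -- the (e+1)-st difference of each digit coordinate vanishes
    have hFz : ∀ d i, i + e + 2 ≤ L → dder^[e+1] (F d) i = 0 := by
      intro d i hi
      set w : Fin D → ℤ := fun d => dder^[e+1] (F d) i with hw
      have hphiw : phi B w = dder^[e+1] v i := by
        have e1 : phi B w = ∑ d : Fin D, dder^[e+1] (fun x => B ^ (d:ℕ) * F d x) i := by
          rw [phi]
          refine Finset.sum_congr rfl fun d _ => ?_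
          rw [dder_iter_const_mul]
          ring
        have e2 : ∑ d : Fin D, dder^[e+1] (fun x => B ^ (d:ℕ) * F d x) i
            = dder^[e+1] (fun x => ∑ d : Fin D, B ^ (d:ℕ) * F d x) i := by
          rw [dder_iter_sum]
        have e3 : dder^[e+1] (fun x => ∑ d : Fin D, B ^ (d:ℕ) * F d x) i
            = dder^[e+1] v i := by
          refine dder_iter_congr fun j h1 h2 => ?_
          have hjL : j < L := by omega
          rw [← (hZspec j hjL).2, phi]
          refine Finset.sum_congr rfl fun d _ => ?_
          ring
        rw [e1, e2, e3]
      have hwb : ∀ d, 2 * |w d| < B := by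
        intro d
        have h1 : |dder^[e+1] (F d) i| ≤ 2^(e+1) * ((M:ℤ) - 1) := by
          refine abs_dder_iter_le fun j h1 h2 => ?_
          have hjL : j < L := by omega
          have := hFbound j hjL d
          rw [abs_of_nonneg this.1]
          omega
        have he2 : (2:ℤ)^(e+2) ≤ 2^(L+2) := by
          apply pow_le_pow_right₀ (by norm_num)
          omega
        have hM1 : (0:ℤ) ≤ (M:ℤ) - 1 := by
          have : (1:ℤ) ≤ (M:ℤ) := by exact_mod_cast hM
          omega
        have n2 : B = (2:ℤ)^(L+2) * (M:ℤ) := by rw [hBdef]; push_cast; ring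
        have n3 : (2:ℤ)*(2^(e+1)*((M:ℤ)-1)) = 2^(e+2)*((M:ℤ)-1) := by ring
        have n4 : (0:ℤ) ≤ ((2:ℤ)^(L+2) - 2^(e+2)) * ((M:ℤ)-1) :=
          mul_nonneg (by linarith) hM1
        have n5 : (0:ℤ) < 2^(L+2) := pow_pos (by norm_num) (L+2)
        have h2 : (2:ℤ) * (2^(e+1) * ((M:ℤ)-1)) < B := by
          rw [n2]; nlinarith
        have h1' : |w d| ≤ 2^(e+1) * ((M:ℤ)-1) := by
          show |dder^[e+1] (F d) i| ≤ _
          exact h1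
        linarith [abs_nonneg (w d)]
      have := phi_eq_zero hBpos w hwb (by rw [hphiw, hv0 i hi])
      exact this d
    -- e-th difference of digit coordinates is "constant"
    have hFc : ∀ d x, x + e + 1 ≤ L → dder^[e] (F d) x = dder^[e] (F d) 0 := by
      intro d x
      induction x with
      | zero => intro _; rfl
      | succ x ih =>
        intro hx
        have h1 : dder^[e+1] (F d) x = 0 := hFz d x (by omega)
        rw [dder_iter_succ'] at h1
        have := ih (by omega)
        omega
    -- the leading difference vector is nonzero
    have hζ : ∃ d, dder^[e] (F d) 0 ≠ 0 := by
      by_contra hcon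
      push_neg at hcon
      have hphie : phi B (fun d => dder^[e] (F d) 0) = dder^[e] v 0 := by
        have e1 : phi B (fun d => dder^[e] (F d) 0) =
            ∑ d : Fin D, dder^[e] (fun x => B ^ (d:ℕ) * F d x) 0 := by
          rw [phi]
          refine Finset.sum_congr rfl fun d _ => ?_
          rw [dder_iter_const_mul]; ring
        rw [e1, ← dder_iter_sum]
        refine dder_iter_congr fun j h1 h2 => ?_
        have hjL : j < L := by omega
        rw [← (hZspec j hjL).2, phi]
        exact Finset.sum_congr rfl fun d _ => by ring
      have : phi B (fun d => dder^[e] (F d) 0) = 0 := by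
        rw [phi]
        refine Finset.sum_eq_zero fun d _ => ?_
        rw [hcon d]; ring
      rw [this] at hphie
      omega
    -- now build the pattern of degree 2e in S'
    refine hfree (2*e) (fun i => psi (Z i) - t) (by omega) (by omega) (by omega) ?_ ?_ ?_
    · -- vanishing of (2e+1)-st differences
      intro i hi
      rw [dder_iter_sub_const _ _ _ _ (by omega)]
      show dder^[2*e+1] (fun x => ∑ d : Fin D, F d x * F d x) i = 0
      rw [dder_iter_sum]
      refine Finset.sum_eq_zero fun d _ => ?_
      rw [dder_leibniz]
      refine Finset.sum_eq_zero fun j hj => ?_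
      have hjb : j < 2*e+1+1 := Finset.mem_range.mp hj
      rcases le_or_gt (e+1) j with hje | hje
      · have : dder^[j] (F d) (i + (2*e+1 - j)) = 0 := by
          refine dder_iter_eq_zero hje fun x hx1 hx2 => ?_
          exact hFz d x (by omega)
        rw [this]; ring
      · have : dder^[2*e+1-j] (F d) i = 0 := by
          refine dder_iter_eq_zero (a := e+1) (by omega) fun x hx1 hx2 => ?_
          exact hFz d x (by omega)
        rw [this]; ring
    · -- positive leading difference
      rw [dder_iter_sub_const _ _ _ _ (by omega)]
      show 0 < dder^[2*e] (fun x => ∑ d : Fin D, F d x * F d x) 0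
      rw [dder_iter_sum]
      have hterm : ∀ d : Fin D, dder^[2*e] (fun x => F d x * F d x) 0
          = ((2*e).choose e : ℤ) * (dder^[e] (F d) 0)^2 := by
        intro d
        rw [dder_leibniz]
        rw [Finset.sum_eq_single e]
        · simp only [show 2*e - e = e from by omega, zero_add]
          rw [hFc d e (by omega)]
          ring
        · intro j hj hne
          have hjb : j < 2*e+1 := Finset.mem_range.mp hj
          rcases le_or_gt (e+1) j with hje | hje
          · have : dder^[j] (F d) (0 + (2*e - j)) = 0 := by
              refine dder_iter_eq_zero hje fun x hx1 hx2 => ?_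
              exact hFz d x (by omega)
            rw [this]; ring
          · have hje' : j + 1 ≤ e := by omega
            have : dder^[2*e-j] (F d) 0 = 0 := by
              refine dder_iter_eq_zero (a := e+1) (by omega) fun x hx1 hx2 => ?_
              exact hFz d x (by omega)
            rw [this]; ring
        · intro h
          exact absurd (Finset.mem_range.mpr (by omega)) h
      rw [Finset.sum_congr rfl fun d _ => hterm d, ← Finset.mul_sum]
      obtain ⟨d0, hd0⟩ := hζ
      have h1 : 0 < ∑ d : Fin D, (dder^[e] (F d) 0)^2 := by
        refine Finset.sum_pos' (fun d _ => sq_nonneg _) ⟨d0, Finset.mem_univ d0, ?_⟩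
        positivity
      have h2 : (0:ℤ) < ((2*e).choose e : ℤ) := by
        exact_mod_cast Nat.choose_pos (by omega)
      positivity
    · -- membership
      intro i hi
      exact (hZspec i hi).1.2
  · -- cardinality
    have himg : (good.image (phi B)).card = good.card := by
      refine Finset.card_image_of_injOn fun z1 h1 z2 h2 heq => ?_
      have hz1 := Finset.mem_filter.mp h1 |>.1
      have hz2 := Finset.mem_filter.mp h2 |>.1
      funext d
      have hzero : ∀ d, z1 d - z2 d = 0 := by
        refine phi_eq_zero hBpos (fun d => z1 d - z2 d) ?_ ?_
        · intro d
          have a1 := hmembox z1 hz1 d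
          have a2 := hmembox z2 hz2 d
          have habs : |z1 d - z2 d| ≤ (M:ℤ) - 1 := by rw [abs_le]; omega
          have h4 : ((4*M : ℕ) : ℤ) ≤ B := by
            rw [hBdef]
            have : 4*M ≤ 2^(L+2)*M := by
              have h5 : 4 ≤ 2^(L+2) := by
                calc 4 = 2^2 := rfl
                _ ≤ 2^(L+2) := Nat.pow_le_pow_right (by norm_num) (by omega)
              exact Nat.mul_le_mul_right M h5
            exact_mod_cast this
          show 2 * |z1 d - z2 d| < B
          push_cast at h4
          omega
        · have : phi B (fun d => z1 d - z2 d) = phi B z1 - phi B z2 := by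
            rw [phi, phi, phi, ← Finset.sum_sub_distrib]
            exact Finset.sum_congr rfl fun d _ => by ring
          rw [this, heq, sub_self]
      have := hzero d
      omega
    rw [himg]
    rw [hboxcard] at hcard
    rw [hTcard] at hcard
    exact hcard

lemma rankin_level (L s : ℕ) (hL : L = 2^s + 1) :
    ∀ r, r ≤ s → ∃ c : ℕ, 1 ≤ c ∧ ∀ b N : ℕ, 4 ≤ b → 1 ≤ N → N ≤ 2^(b^(r+1)) →
      ∃ S : Finset ℤ, S ⊆ Finset.Ico 0 (N:ℤ) ∧ Free S L (2^(s-r)) ∧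
        N ≤ S.card * 2^(c*b) := by
  intro r
  induction r with
  | zero =>
    intro _
    refine ⟨1, le_rfl, fun b N hb hN hNb => ?_⟩
    refine ⟨{0}, ?_, singleton_free 0 L _, ?_⟩
    · intro x hx
      simp only [Finset.mem_singleton] at hx
      subst hx
      simp only [Finset.mem_Ico, le_refl, true_and]
      exact_mod_cast hN
    · simpa using hNb.trans (Nat.pow_le_pow_right (by norm_num) (by simpa using le_rfl))
  | succ r ih =>
    intro hr1
    obtain ⟨c, hc1, hc⟩ := ih (by omega)
    refine ⟨3*c + L + 4, by omega, fun b N hb hN hNb => ?_⟩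
    set C : ℕ := 2^(L+2) with hC
    rcases le_or_gt N (2^((L+2)*b)) with hsmall | hbig
    · -- use a singleton
      refine ⟨{0}, ?_, singleton_free 0 L _, ?_⟩
      · intro x hx
        simp only [Finset.mem_singleton] at hx
        subst hx
        simp only [Finset.mem_Ico, le_refl, true_and]
        exact_mod_cast hN
      · calc N ≤ 2^((L+2)*b) := hsmall
        _ ≤ 2^((3*c+L+4)*b) := Nat.pow_le_pow_right (by norm_num) (by nlinarith)
        _ = Finset.card {(0:ℤ)} * 2^((3*c+L+4)*b) := by simp
    · -- main construction
      have hCb : C^b = 2^((L+2)*b) := by rw [hC, ← pow_mul]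
      set P : ℕ → Prop := fun m => (C*m)^b ≤ N with hP
      have hPdec : DecidablePred P := fun m => Nat.decLe _ _
      set M : ℕ := Nat.findGreatest P N with hMdef
      have hP1 : P 1 := by
        simp only [hP, mul_one]
        rw [hCb]; exact hbig.le
      have hM1 : 1 ≤ M := Nat.le_findGreatest hN hP1
      have hMle : (C*M)^b ≤ N := Nat.findGreatest_spec hN hP1
      have hMltN : M < N := by
        by_contra hcon
        push_neg at hcon
        have hMN : M ≤ N := Nat.findGreatest_le N
        have hMN' : M = N := le_antisymm hMN hcon
        have h2 : 2*N ≤ C*M := by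
          rw [hMN', hC]
          have : 2 ≤ 2^(L+2) := by
            calc 2 = 2^1 := rfl
            _ ≤ 2^(L+2) := Nat.pow_le_pow_right (by norm_num) (by omega)
          exact Nat.mul_le_mul_right N this
        have h3 : C*M ≤ (C*M)^b := Nat.le_self_pow (by omega) _
        omega
      have hNM : N < (C*(M+1))^b := by
        have := Nat.findGreatest_is_greatest (show Nat.findGreatest P N < M+1 by omega)
          (by omega : M+1 ≤ N)
        simpa [hP] using this
      have hNle2 : N ≤ 2^b * (C*M)^b := by
        have h1 : (C*(M+1))^b ≤ (C*(2*M))^b :=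
          Nat.pow_le_pow_left (Nat.mul_le_mul_left C (by omega)) b
        have h2 : (C*(2*M))^b = 2^b * (C*M)^b := by
          rw [show C*(2*M) = 2*(C*M) by ring, mul_pow]
        omega
      have hCM : C*M ≤ 2^(b^(r+1)) := by
        have h1 : (C*M)^b ≤ (2^(b^(r+1)))^b := by
          rw [← pow_mul, show b^(r+1)*b = b^(r+2) from by rw [← pow_succ]]
          exact hMle.trans hNb
        exact (Nat.pow_le_pow_iff_left (by omega)).mp h1
      set N'' : ℕ := b*M^2+1 with hN''
      have hN''b : N'' ≤ 2^((3*b)^(r+1)) := by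
        have hMb : M ≤ 2^(b^(r+1)) := le_trans (Nat.le_mul_of_pos_left M (by positivity)) hCM
        have h1 : M^2 ≤ 2^(2*b^(r+1)) := by
          calc M^2 ≤ (2^(b^(r+1)))^2 := Nat.pow_le_pow_left hMb 2
          _ = 2^(2*b^(r+1)) := by rw [← pow_mul, mul_comm]
        have h2 : N'' ≤ 2^b * 2^(2*b^(r+1)) := by
          have hb2 : b+1 ≤ 2^b := Nat.succ_le_of_lt (Nat.lt_two_pow_self (n := b))
          calc N'' = b*M^2+1 := rfl
          _ ≤ (b+1)*M^2 := by nlinarith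
          _ ≤ 2^b * M^2 := Nat.mul_le_mul_right _ hb2
          _ ≤ 2^b * 2^(2*b^(r+1)) := Nat.mul_le_mul_left _ h1
        calc N'' ≤ 2^b * 2^(2*b^(r+1)) := h2
        _ = 2^(b + 2*b^(r+1)) := by rw [← pow_add]
        _ ≤ 2^((3*b)^(r+1)) := by
            apply Nat.pow_le_pow_right (by norm_num)
            have h3 : (3*b)^(r+1) = 3^(r+1) * b^(r+1) := by rw [mul_pow]
            have h4 : 3 ≤ 3^(r+1) := Nat.le_self_pow (by omega) 3
            have h5 : b ≤ b^(r+1) := Nat.le_self_pow (by omega) b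
            nlinarith
      obtain ⟨S', hS'sub, hS'free, hS'card⟩ := hc (3*b) N'' (by omega) (Nat.le_add_left 1 _) hN''b
      have hgrade : 2 * 2^(s - (r+1)) = 2^(s-r) := by
        rw [← pow_succ']
        congr 1
        omega
      have h2E : 2 * 2^(s-(r+1)) + 1 ≤ L := by
        rw [hgrade, hL]
        have : 2^(s-r) ≤ 2^s := Nat.pow_le_pow_right (by norm_num) (by omega)
        omega
      obtain ⟨S, hSsub, hSfree, hScard⟩ := transfer L (2^(s-(r+1))) b M S'
        (Nat.one_le_two_pow) h2E (by omega) hM1 (by rw [hN''] at hS'sub; exact_mod_cast hS'sub)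
        (by rw [hgrade]; exact hS'free)
      refine ⟨S, ?_, hSfree, ?_⟩
      · refine hSsub.trans ?_
        apply Finset.Ico_subset_Ico le_rfl
        rw [← hC]
        exact_mod_cast hMle
      · -- cardinality chase
        have k0 : 0 < N'' := Nat.succ_pos _
        have k1 : N * N'' ≤ (2^b * C^b) * (M^b * N'') := by
          calc N * N'' ≤ (2^b * (C*M)^b) * N'' := Nat.mul_le_mul_right _ hNle2
          _ = (2^b * C^b) * (M^b * N'') := by rw [mul_pow]; ring
        have k2 : M^b * N'' ≤ M^b * (S'.card * 2^(c*(3*b))) := Nat.mul_le_mul_left _ hS'card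
        have k3 : M^b * S'.card ≤ 2*N'' * S.card := by
          calc M^b * S'.card ≤ (2*(b*M^2)+1) * S.card := hScard
          _ ≤ 2*N'' * S.card := Nat.mul_le_mul_right _ (by omega)
        have k4 : N * N'' ≤ ((2^b * C^b) * (2 * 2^(c*(3*b)) * S.card)) * N'' := by
          calc N * N'' ≤ (2^b * C^b) * (M^b * N'') := k1
          _ ≤ (2^b * C^b) * (M^b * (S'.card * 2^(c*(3*b)))) := Nat.mul_le_mul_left _ k2
          _ = (2^b * C^b) * ((M^b * S'.card) * 2^(c*(3*b))) := by ring
          _ ≤ (2^b * C^b) * ((2*N'' * S.card) * 2^(c*(3*b))) :=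
              Nat.mul_le_mul_left _ (Nat.mul_le_mul_right _ k3)
          _ = ((2^b * C^b) * (2 * 2^(c*(3*b)) * S.card)) * N'' := by ring
        have k5 : N ≤ (2^b * C^b) * (2 * 2^(c*(3*b)) * S.card) :=
          Nat.le_of_mul_le_mul_right k4 k0
        calc N ≤ (2^b * C^b) * (2 * 2^(c*(3*b)) * S.card) := k5
        _ = S.card * (2^b * 2^((L+2)*b) * 2^1 * 2^(c*(3*b))) := by rw [hCb]; ring
        _ = S.card * 2^(b + (L+2)*b + 1 + c*(3*b)) := by rw [← pow_add, ← pow_add, ← pow_add]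
        _ ≤ S.card * 2^((3*c+L+4)*b) := by
            apply Nat.mul_le_mul_left
            apply Nat.pow_le_pow_right (by norm_num)
            ring_nf
            omega

def sig (k : ℕ) (x : Fin k → ℕ) : ℤ := ∑ i : Fin k, ((i:ℕ)+1 : ℤ) * (x i : ℤ)

lemma gridNk_card (k n : ℕ) : (gridNk k n).card = n^k := by
  rw [gridNk, Fintype.card_piFinset]
  simp [Nat.card_Icc]

lemma mem_gridNk {k n : ℕ} {x : Fin k → ℕ} (hx : x ∈ gridNk k n) :
    ∀ i, 1 ≤ x i ∧ x i ≤ n := by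
  intro i
  rw [gridNk, Fintype.mem_piFinset] at hx
  simpa [Finset.mem_Icc] using hx i

lemma sig_bounds {k n : ℕ} (hk : 1 ≤ k) {x : Fin k → ℕ} (hx : x ∈ gridNk k n) :
    1 ≤ sig k x ∧ sig k x ≤ ((k^2*n : ℕ) : ℤ) := by
  have hxi := mem_gridNk hx
  constructor
  · have h1 : (1:ℤ) ≤ ∑ _i : Fin k, (1:ℤ) := by
      rw [Finset.sum_const, Finset.card_univ, Fintype.card_fin]
      simp
      exact_mod_cast hk
    refine h1.trans (Finset.sum_le_sum fun i _ => ?_)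
    have h2 := (hxi i).1
    have h3 : (1:ℤ) ≤ ((x i : ℕ) : ℤ) := by exact_mod_cast h2
    nlinarith [Int.ofNat_nonneg (i:ℕ)]
  · have h1 : sig k x ≤ ∑ _i : Fin k, ((k*n : ℕ) : ℤ) := by
      refine Finset.sum_le_sum fun i _ => ?_
      have h2 := (hxi i).2
      have h3 : ((i:ℕ)+1 : ℤ) ≤ (k:ℤ) := by
        have := i.2
        omega
      have h4 : ((x i : ℕ) : ℤ) ≤ (n:ℤ) := by exact_mod_cast h2
      have h5 : (0:ℤ) ≤ ((x i : ℕ) : ℤ) := Int.ofNat_nonneg _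
      push_cast
      nlinarith
    rw [Finset.sum_const, Finset.card_univ, Fintype.card_fin, nsmul_eq_mul] at h1
    refine h1.trans ?_
    push_cast
    nlinarith [Int.ofNat_nonneg k, Int.ofNat_nonneg n]

lemma sig_update {k : ℕ} (a : Fin k → ℕ) (i : Fin k) (d : ℕ) :
    sig k (Function.update a i (a i + d)) = sig k a + ((i:ℕ)+1) * (d:ℤ) := by
  rw [sig, sig]
  rw [← Finset.sum_compl_add_sum {i}, ← Finset.sum_compl_add_sum {i} (f := fun j => ((j:ℕ)+1:ℤ) * ((a j : ℕ) : ℤ))]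
  have h1 : ∀ j ∈ ({i} : Finset (Fin k))ᶜ, ((j:ℕ)+1:ℤ) * ((Function.update a i (a i + d) j : ℕ) : ℤ)
      = ((j:ℕ)+1:ℤ) * ((a j : ℕ) : ℤ) := by
    intro j hj
    rw [Finset.mem_compl, Finset.mem_singleton] at hj
    rw [Function.update_of_ne hj]
  rw [Finset.sum_congr rfl h1]
  simp only [Finset.sum_singleton, Function.update_self]
  push_cast
  ring

/-- The corner-free set built from a progression-free set. -/
lemma corner_construction (k n s : ℕ) (hk : 2 ≤ k) (hsk : 2^s < k) (hn : 1 ≤ n)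
    (B : Finset ℤ) (hBsub : B ⊆ Finset.Ico 0 ((k^2*n : ℕ) : ℤ))
    (hBfree : Free B (2^s+1) 1) :
    ∃ A : Finset (Fin k → ℕ), A ⊆ gridNk k n ∧ GridCornerFree k n A ∧
      n^k * B.card ≤ (2*(k^2*n)) * A.card := by
  classical
  set N : ℕ := k^2*n with hN
  set T : Finset ℤ := Finset.Icc (1 - (N:ℤ)) (N:ℤ) with hT
  have hTmem : ∀ x ∈ gridNk k n, ∀ y ∈ B, sig k x - y ∈ T := by
    intro x hx y hy
    have h1 := sig_bounds (by omega) hx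
    have h2 := hBsub hy
    simp only [Finset.mem_Ico] at h2
    simp only [hT, Finset.mem_Icc]
    omega
  have hTne : T.Nonempty := ⟨1, by
    simp only [hT, Finset.mem_Icc]
    constructor
    · omega
    · have h0 : 0 < N := by positivity
      have h1 : 1 ≤ N := h0
      exact_mod_cast h1⟩
  have hTcard : T.card = 2*N := by
    rw [hT, Int.card_Icc]
    have h1 : ((N:ℤ) + 1 - (1 - (N:ℤ))) = ((2*N : ℕ) : ℤ) := by push_cast; ring
    rw [h1, Int.toNat_natCast]
  obtain ⟨t, _, hcard⟩ := shift_pigeon (gridNk k n) B T (sig k) hTmem hTne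
  set A : Finset (Fin k → ℕ) := (gridNk k n).filter (fun x => sig k x - t ∈ B) with hA
  refine ⟨A, Finset.filter_subset _ _, ?_, ?_⟩
  · -- corner-freeness
    intro Cn hC hCA
    obtain ⟨a, d, hd, hCeq, hCsub⟩ := hC
    have haA : a ∈ A := hCA (hCeq ▸ Finset.mem_insert_self a _)
    have hptA : ∀ i : Fin k, Function.update a i (a i + d) ∈ A := fun i =>
      hCA (hCeq ▸ Finset.mem_insert_of_mem
        (Finset.mem_image_of_mem _ (Finset.mem_univ i)))
    set v : ℕ → ℤ := fun idx => (sig k a - t) + idx * (d:ℤ) with hv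
    refine hBfree 1 v le_rfl le_rfl (by have := Nat.one_le_two_pow (n := s); omega) ?_ ?_ ?_
    · intro i _
      have h2 : dder^[2] v i = dder (dder v) i := by
        rw [show (2:ℕ) = 1+1 from rfl, Function.iterate_succ_apply, Function.iterate_one]
      rw [h2]
      simp only [hv, dder]
      push_cast
      ring
    · simp only [Function.iterate_one, hv, dder]
      push_cast
      have : (0:ℤ) < (d:ℤ) := by exact_mod_cast hd
      linarith
    · intro idx hidx
      cases idx with
      | zero =>
        have := Finset.mem_filter.mp haA |>.2
        simpa [hv] using this
      | succ j =>
        have hjk : j < k := by omega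
        have hiA := hptA ⟨j, hjk⟩
        have h1 := Finset.mem_filter.mp hiA |>.2
        rw [sig_update] at h1
        have h2 : v (j+1) = sig k a + ((j:ℕ)+1) * (d:ℤ) - t := by
          rw [hv]
          push_cast
          ring
        rw [h2]
        exact h1
  · -- cardinality
    rw [gridNk_card] at hcard
    rw [hTcard] at hcard
    exact hcard

end Rankin

open Rankin in
/-- Behrend–Rankin lower bound: for every `k ≥ 2` there is `α_k > 0` such that for all
sufficiently large `n`, `c_k(n)/n^k > 2^(−α_k·(log n)^(β_k))` where `β_k = 1/⌈log₂ k⌉`.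
Logarithms are base 2. -/
theorem cornerFreeNumber_lower_bound (k : ℕ) (hk : 2 ≤ k) :
    ∃ α : ℝ, 0 < α ∧ ∃ n₀ : ℕ, ∀ n : ℕ, n₀ ≤ n →
      (2 : ℝ) ^ (-(α * (Real.logb 2 (n : ℝ)) ^ ((1 : ℝ) / (⌈Real.logb 2 (k : ℝ)⌉ : ℝ)))) <
        (cornerFreeNumber k n : ℝ) / (n : ℝ) ^ k := by
  classical
  set X : ℝ := Real.logb 2 (k : ℝ) with hX
  have hkR : (2:ℝ) ≤ (k:ℝ) := by exact_mod_cast hk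
  have hX1 : 1 ≤ X := by
    rw [hX]
    calc (1:ℝ) = Real.logb 2 2 := (Real.logb_self_eq_one (by norm_num)).symm
    _ ≤ Real.logb 2 (k:ℝ) := Real.logb_le_logb_of_le (by norm_num) (by norm_num) hkR
  have hceil1 : 1 ≤ ⌈X⌉ := Int.ceil_pos.mpr (by linarith)
  set m : ℕ := (⌈X⌉).toNat with hm
  have hm1 : 1 ≤ m := by omega
  have hmR : ((m:ℕ):ℝ) = ((⌈X⌉ : ℤ) : ℝ) := by
    have h : ((m:ℕ):ℤ) = ⌈X⌉ := by rw [hm]; exact Int.toNat_of_nonneg (by omega)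
    exact_mod_cast h
  set s : ℕ := m - 1 with hs
  have hsm : s + 1 = m := by omega
  -- 2^s < k
  have h2sk : 2^s < k := by
    have h1 : ((s:ℕ):ℝ) < X := by
      have h2 : ((⌈X⌉:ℤ):ℝ) < X + 1 := Int.ceil_lt_add_one X
      rw [← hmR] at h2
      have h3 : ((s:ℕ):ℝ) = (m:ℝ) - 1 := by
        rw [hs]
        push_cast [Nat.cast_sub hm1]
        ring
      linarith
    have h2 : (2:ℝ)^((s:ℕ):ℝ) < (2:ℝ)^X := by
      exact Real.rpow_lt_rpow_left_iff (by norm_num) |>.mpr h1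
    have h3 : (2:ℝ)^X = (k:ℝ) := Real.rpow_logb (by norm_num) (by norm_num)
      (by positivity)
    rw [Real.rpow_natCast] at h2
    rw [h3] at h2
    exact_mod_cast h2
  obtain ⟨c, hc1, hc⟩ := rankin_level (2^s+1) s rfl s le_rfl
  refine ⟨7*(c:ℝ) + 2, by positivity, k^2 + 2, fun n hn => ?_⟩
  have hn2 : 2 ≤ n := by nlinarith
  have hnk2 : k^2 ≤ n := by omega
  have hn1 : 1 ≤ n := by omega
  set N : ℕ := k^2*n with hN
  have hN0 : 0 < N := by positivity
  have hN1 : 1 ≤ N := hN0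
  set Y : ℝ := Real.logb 2 (n:ℝ) with hY
  have hY1 : 1 ≤ Y := by
    rw [hY]
    calc (1:ℝ) = Real.logb 2 2 := (Real.logb_self_eq_one (by norm_num)).symm
    _ ≤ Real.logb 2 (n:ℝ) := Real.logb_le_logb_of_le (by norm_num) (by norm_num)
        (by exact_mod_cast hn2)
  set XN : ℝ := Real.logb 2 (N:ℝ) with hXN
  have hXN0 : 0 ≤ XN := Real.logb_nonneg (by norm_num) (by exact_mod_cast hN1)
  set z : ℕ := ⌈XN ^ ((1:ℝ)/(m:ℝ))⌉₊ with hz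
  set Q : ℝ := Y ^ ((1:ℝ)/(m:ℝ)) with hQ
  have hmRne : (m:ℝ) ≠ 0 := by positivity
  have hQ1 : 1 ≤ Q := by
    rw [hQ]
    calc (1:ℝ) = (1:ℝ) ^ ((1:ℝ)/(m:ℝ)) := (Real.one_rpow _).symm
    _ ≤ Y ^ ((1:ℝ)/(m:ℝ)) := Real.rpow_le_rpow (by norm_num) hY1 (by positivity)
  set b : ℕ := max 4 z with hb
  have hb4 : 4 ≤ b := le_max_left _ _
  -- N ≤ 2^(b^m)
  have hNb : N ≤ 2^(b^(s+1)) := by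
    rw [hsm]
    have h1 : XN ^ ((1:ℝ)/(m:ℝ)) ≤ (b:ℝ) := by
      calc XN ^ ((1:ℝ)/(m:ℝ)) ≤ (z : ℝ) := hz ▸ Nat.le_ceil _
      _ ≤ (b:ℝ) := by exact_mod_cast le_max_right 4 z
    have h2 : XN ≤ (b:ℝ)^(m:ℕ) := by
      calc XN = (XN ^ ((1:ℝ)/(m:ℝ))) ^ ((m:ℕ):ℝ) := by
            rw [← Real.rpow_mul hXN0, one_div, inv_mul_cancel₀ hmRne, Real.rpow_one]
      _ ≤ (b:ℝ) ^ ((m:ℕ):ℝ) := by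
            apply Real.rpow_le_rpow (Real.rpow_nonneg hXN0 _) h1 (by positivity)
      _ = (b:ℝ)^(m:ℕ) := Real.rpow_natCast _ _
    have h3 : (N:ℝ) ≤ (2:ℝ)^((b^m : ℕ):ℕ) := by
      calc (N:ℝ) = (2:ℝ)^XN := (Real.rpow_logb (by norm_num) (by norm_num)
            (by exact_mod_cast hN1 : (0:ℝ) < (N:ℝ))).symm
      _ ≤ (2:ℝ)^(((b^m : ℕ):ℕ):ℝ) := by
            apply Real.rpow_le_rpow_of_exponent_le (by norm_num)
            push_cast
            exact h2
      _ = (2:ℝ)^((b^m : ℕ):ℕ) := Real.rpow_natCast _ _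
    exact_mod_cast h3
  obtain ⟨B, hBsub, hBfree, hBcard⟩ := hc b N hb4 hN1 hNb
  have hBfree1 : Free B (2^s+1) 1 := by
    have : s - s = 0 := by omega
    rw [this, pow_zero] at hBfree
    exact hBfree
  obtain ⟨A, hAsub, hAfree, hAcard⟩ :=
    corner_construction k n s hk h2sk hn1 B (by rw [← hN]; exact hBsub) hBfree1
  -- n^k ≤ A.card * 2^(c*b+1)
  have hnk : n^k ≤ A.card * 2^(c*b+1) := by
    have k1 : n^k * N ≤ (A.card * 2^(c*b+1)) * N := by
      calc n^k * N ≤ n^k * (B.card * 2^(c*b)) := Nat.mul_le_mul_left _ hBcard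
      _ = (n^k * B.card) * 2^(c*b) := by ring
      _ ≤ ((2*(k^2*n)) * A.card) * 2^(c*b) := Nat.mul_le_mul_right _ hAcard
      _ = (A.card * 2^(c*b+1)) * N := by rw [hN, pow_succ]; ring
    exact Nat.le_of_mul_le_mul_right k1 (by omega)
  -- cornerFreeNumber ≥ A.card
  have hcfn : A.card ≤ cornerFreeNumber k n := by
    apply le_csSup
    · refine ⟨n^k, fun m hm => ?_⟩
      obtain ⟨A', hA', _, hcard⟩ := hm
      rw [← hcard, ← gridNk_card k n]
      exact Finset.card_le_card hA'
    · exact ⟨A, hAsub, hAfree, rfl⟩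
  -- real endgame
  have hnkpos : (0:ℝ) < (n:ℝ)^k := by positivity
  have hXNle : XN ≤ 2*Y := by
    have h1 : (N:ℝ) = (k:ℝ)^2 * (n:ℝ) := by rw [hN]; push_cast; ring
    have h2 : XN = Real.logb 2 ((k:ℝ)^2) + Y := by
      rw [hXN, h1, Real.logb_mul (by positivity) (by positivity), hY]
    have h3 : Real.logb 2 ((k:ℝ)^2) ≤ Y := by
      rw [hY]
      apply Real.logb_le_logb_of_le (by norm_num) (by positivity)
      have : ((k^2:ℕ):ℝ) ≤ (n:ℝ) := by exact_mod_cast hnk2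
      push_cast at this
      linarith
    linarith
  have hbQ : (b:ℝ) ≤ 5 + 2*Q := by
    have h1n : b ≤ 4 + z := max_le (by omega) (by omega)
    have h1 : (b:ℝ) ≤ 4 + (z : ℝ) := by exact_mod_cast h1n
    have h2 : (z : ℝ) < XN ^ ((1:ℝ)/(m:ℝ)) + 1 := by
      rw [hz]
      exact Nat.ceil_lt_add_one (by positivity)
    have h3 : XN ^ ((1:ℝ)/(m:ℝ)) ≤ 2*Q := by
      calc XN ^ ((1:ℝ)/(m:ℝ)) ≤ (2*Y) ^ ((1:ℝ)/(m:ℝ)) :=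
            Real.rpow_le_rpow hXN0 hXNle (by positivity)
      _ = (2:ℝ)^((1:ℝ)/(m:ℝ)) * Y ^ ((1:ℝ)/(m:ℝ)) :=
            Real.mul_rpow (by norm_num) (by linarith)
      _ ≤ 2 * Q := by
            rw [hQ]
            have h4 : (2:ℝ)^((1:ℝ)/(m:ℝ)) ≤ 2 := by
              calc (2:ℝ)^((1:ℝ)/(m:ℝ)) ≤ (2:ℝ)^(1:ℝ) := by
                    apply Real.rpow_le_rpow_of_exponent_le (by norm_num)
                    rw [div_le_one (by positivity)]
                    exact_mod_cast hm1
              _ = 2 := Real.rpow_one 2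
            have h5 : 0 ≤ Y ^ ((1:ℝ)/(m:ℝ)) := Real.rpow_nonneg (by linarith) _
            nlinarith
    linarith
  have hexp : ((c*b+1 : ℕ):ℝ) < (7*(c:ℝ)+2) * Q := by
    have hcR : (1:ℝ) ≤ (c:ℝ) := by exact_mod_cast hc1
    have h1 : ((c*b+1 : ℕ):ℝ) = (c:ℝ)*(b:ℝ) + 1 := by push_cast; ring
    rw [h1]
    have h2 : (c:ℝ)*(b:ℝ) ≤ (c:ℝ)*(5 + 2*Q) := by
      apply mul_le_mul_of_nonneg_left hbQ (by linarith)
    nlinarith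
  -- combine
  have hstep1 : (n:ℝ)^k ≤ (cornerFreeNumber k n : ℝ) * (2:ℝ)^(c*b+1 : ℕ) := by
    have h1 : n^k ≤ cornerFreeNumber k n * 2^(c*b+1) :=
      le_trans hnk (Nat.mul_le_mul_right _ hcfn)
    exact_mod_cast h1
  have hP : (0:ℝ) < (2:ℝ)^(c*b+1 : ℕ) := by positivity
  have hstep2 : (2:ℝ)^(-(((c*b+1:ℕ)):ℝ)) ≤ (cornerFreeNumber k n : ℝ) / (n:ℝ)^k := by
    rw [Real.rpow_neg (by norm_num), Real.rpow_natCast]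
    rw [le_div_iff₀ hnkpos, inv_mul_le_iff₀ hP]
    linarith
  have hstep3 : (2:ℝ)^(-((7*(c:ℝ)+2) * Q)) < (2:ℝ)^(-(((c*b+1:ℕ)):ℝ)) := by
    apply (Real.rpow_lt_rpow_left_iff (by norm_num : (1:ℝ) < 2)).mpr
    linarith
  have hβ : ((1:ℝ)/((⌈X⌉:ℤ):ℝ)) = (1:ℝ)/(m:ℝ) := by rw [← hmR]
  rw [hβ, ← hQ]
  exact lt_of_lt_of_le hstep3 hstep2
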